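/- Let 2 ≤ s ≤ n - 2 and let F ⊆ 2^[n] be an s-union family. Then for every 1 ≤ i ≤ s/2, |F_i| + |F_{s+1-i}| ≤ C(n, i), where F_m = {F ∈ F : |F| = m}. Moreover, equality holds if and only if F_i = binom([n], i) and F_{s+1-i} = ∅. -/

import Mathlib

open Finset

namespace Stmt11Aux

open scoped FinsetFamily






/-- The "level `i` shadow": all `i`-element subsets of members of `H`. -/
def Dlev (i : ℕ) (H : Finset (Finset ℕ)) : Finset (Finset ℕ) :=
  H.biUnion fun A => A.powersetCard i

lemma mem_Dlev {i : ℕ} {H : Finset (Finset ℕ)} {S : Finset ℕ} :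
    S ∈ Dlev i H ↔ ∃ A ∈ H, S ⊆ A ∧ S.card = i := by
  simp [Dlev, Finset.mem_powersetCard]

lemma Dlev_uniform {i : ℕ} {H : Finset (Finset ℕ)} :
    ∀ S ∈ Dlev i H, S.card = i := by
  intro S hS
  exact (mem_Dlev.1 hS).choose_spec.2.2

lemma Dlev_subset_ground {i : ℕ} {H : Finset (Finset ℕ)} {X : Finset ℕ}
    (hX : ∀ A ∈ H, A ⊆ X) : ∀ S ∈ Dlev i H, S ⊆ X := by
  intro S hS
  obtain ⟨A, hA, hSA, -⟩ := mem_Dlev.1 hS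
  exact hSA.trans (hX A hA)

lemma Dlev_mono {i : ℕ} {H H' : Finset (Finset ℕ)} (h : H ⊆ H') :
    Dlev i H ⊆ Dlev i H' := by
  intro S hS
  obtain ⟨A, hA, hSA, hs⟩ := mem_Dlev.1 hS
  exact mem_Dlev.2 ⟨A, h hA, hSA, hs⟩

lemma Dlev_self {H : Finset (Finset ℕ)} {m : ℕ} (hu : ∀ A ∈ H, A.card = m) :
    Dlev m H = H := by
  ext S
  rw [mem_Dlev]
  constructor
  · rintro ⟨A, hA, hSA, hS⟩
    have : S = A := Finset.eq_of_subset_of_card_le hSA (by rw [hu A hA, hS])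
    rwa [this]
  · intro hS; exact ⟨S, hS, Finset.Subset.rfl, hu S hS⟩

lemma Dlev_Dlev {H : Finset (Finset ℕ)} {m k ℓ : ℕ} (hu : ∀ A ∈ H, A.card = m)
    (h1 : ℓ ≤ k) (h2 : k ≤ m) : Dlev ℓ (Dlev k H) = Dlev ℓ H := by
  ext S
  simp only [mem_Dlev]
  constructor
  · rintro ⟨T, ⟨A, hA, hTA, -⟩, hST, hS⟩
    exact ⟨A, hA, hST.trans hTA, hS⟩
  · rintro ⟨A, hA, hSA, hS⟩
    obtain ⟨T, hST, hTA, hT⟩ := Finset.exists_subsuperset_card_eq (n := S.card + (k - ℓ)) hSA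
      (by omega) (by rw [hS, hu A hA]; omega)
    exact ⟨T, ⟨A, hA, hTA, by rw [hT, hS]; omega⟩, hST, hS⟩

/-- One step of local LYM (double counting). -/
lemma lym_step {H : Finset (Finset ℕ)} {X : Finset ℕ} {r : ℕ} (hr : 1 ≤ r)
    (hu : ∀ A ∈ H, A.card = r) (hX : ∀ A ∈ H, A ⊆ X) :
    r * H.card ≤ (X.card - (r - 1)) * (Dlev (r - 1) H).card := by
  classical
  have hP : (H.sigma fun A => A).card = r * H.card := by
    rw [Finset.card_sigma]
    rw [Finset.sum_congr rfl (fun A hA => hu A hA), Finset.sum_const, smul_eq_mul, mul_comm]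
  have hQ : ((Dlev (r - 1) H).sigma fun S => X \ S).card
      = (X.card - (r - 1)) * (Dlev (r - 1) H).card := by
    rw [Finset.card_sigma]
    rw [Finset.sum_congr rfl (fun S hS => ?_), Finset.sum_const, smul_eq_mul, mul_comm]
    rw [Finset.card_sdiff_of_subset (Dlev_subset_ground hX S hS), Dlev_uniform S hS]
  have hinj : ∀ p ∈ H.sigma fun A => A, ∀ q ∈ H.sigma fun A => A,
      (⟨p.1.erase p.2, p.2⟩ : (_ : Finset ℕ) × ℕ) = ⟨q.1.erase q.2, q.2⟩ → p = q := by
    rintro ⟨A, a⟩ hp ⟨B, b⟩ hq h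
    simp only [Finset.mem_sigma] at hp hq
    have h1 : a = b := congrArg Sigma.snd h
    have h2 : A.erase a = B.erase b := by
      have := congrArg Sigma.fst h; simpa using this
    subst h1
    have : A = B := by
      rw [← Finset.insert_erase hp.2, h2, Finset.insert_erase hq.2]
    simp [this]
  have hmaps : ∀ p ∈ H.sigma fun A => A,
      (⟨p.1.erase p.2, p.2⟩ : (_ : Finset ℕ) × ℕ) ∈ (Dlev (r - 1) H).sigma fun S => X \ S := by
    rintro ⟨A, a⟩ hp
    simp only [Finset.mem_sigma] at hp ⊢
    constructor
    · exact mem_Dlev.2 ⟨A, hp.1, Finset.erase_subset _ _, by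
        rw [Finset.card_erase_of_mem hp.2, hu A hp.1]⟩
    · rw [Finset.mem_sdiff]
      exact ⟨hX A hp.1 hp.2, Finset.notMem_erase _ _⟩
  have := Finset.card_le_card_of_injOn _ hmaps (fun p hp q hq => hinj p hp q hq)
  rw [hP, hQ] at this
  exact this

lemma descFactorial_mono {a b : ℕ} (k : ℕ) (h : a ≤ b) :
    a.descFactorial k ≤ b.descFactorial k := by
  induction k with
  | zero => simp
  | succ k ih =>
    rw [Nat.descFactorial_succ, Nat.descFactorial_succ]
    exact Nat.mul_le_mul (Nat.sub_le_sub_right h k) ih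

lemma key_id {m : ℕ} : ∀ {k : ℕ}, k < m →
    (m - k) * m.descFactorial k = m * (m - 1).descFactorial k := by
  intro k
  induction k with
  | zero => simp [Nat.mul_comm]
  | succ k ih =>
    intro h
    have h' : k < m := by omega
    rw [Nat.descFactorial_succ, Nat.descFactorial_succ]
    calc (m - (k + 1)) * ((m - k) * m.descFactorial k)
        = (m - (k + 1)) * (m * (m - 1).descFactorial k) := by rw [ih h']
      _ = m * ((m - 1 - k) * (m - 1).descFactorial k) := by
          rw [show m - (k+1) = m - 1 - k by omega]; ring

/-- Iterated local LYM. -/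
lemma lym_chain {X : Finset ℕ} : ∀ (k : ℕ) (H : Finset (Finset ℕ)) (r ℓ : ℕ), r = ℓ + k → 1 ≤ ℓ →
    (∀ A ∈ H, A.card = r) → (∀ A ∈ H, A ⊆ X) →
    Nat.descFactorial r k * H.card
      ≤ Nat.descFactorial (X.card - ℓ) k * (Dlev ℓ H).card := by
  intro k
  induction k with
  | zero =>
    intro H r ℓ hr hℓ hu hX
    subst hr
    simp [Dlev_self hu]
  | succ k ih =>
    intro H r ℓ hr hℓ hu hX
    have hr1 : 1 ≤ r := by omega
    have hu' : ∀ A ∈ Dlev (r - 1) H, A.card = r - 1 := Dlev_uniform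
    have hX' : ∀ A ∈ Dlev (r - 1) H, A ⊆ X := Dlev_subset_ground hX
    have hstep := lym_step hr1 hu hX
    have hih := ih (Dlev (r - 1) H) (r - 1) ℓ (by omega) hℓ hu' hX'
    rw [Dlev_Dlev hu (by omega) (by omega)] at hih
    have e1 : Nat.descFactorial r (k + 1) = r * Nat.descFactorial (r - 1) k := by
      have : r = (r - 1) + 1 := by omega
      rw [this, Nat.succ_descFactorial_succ]; simp
    have e2 : Nat.descFactorial (X.card - ℓ) (k + 1)
        = (X.card - (r - 1)) * Nat.descFactorial (X.card - ℓ) k := by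
      rw [Nat.descFactorial_succ, show X.card - ℓ - k = X.card - (r - 1) by omega]
    calc Nat.descFactorial r (k + 1) * H.card
        = Nat.descFactorial (r - 1) k * (r * H.card) := by rw [e1]; ring
      _ ≤ Nat.descFactorial (r - 1) k * ((X.card - (r - 1)) * (Dlev (r - 1) H).card) :=
          Nat.mul_le_mul_left _ hstep
      _ = (X.card - (r - 1)) * (Nat.descFactorial (r - 1) k * (Dlev (r - 1) H).card) := by ring
      _ ≤ (X.card - (r - 1)) * (Nat.descFactorial (X.card - ℓ) k * (Dlev ℓ H).card) :=
          Nat.mul_le_mul_left _ hih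
      _ = Nat.descFactorial (X.card - ℓ) (k + 1) * (Dlev ℓ H).card := by rw [e2]; ring

/-- The small-ground case of the Katona-type bound: pure LYM counting. -/
lemma small_ground {H : Finset (Finset ℕ)} {X : Finset ℕ} {m i : ℕ} (hi : 1 ≤ i) (him : i ≤ m)
    (hu : ∀ A ∈ H, A.card = m) (hX : ∀ A ∈ H, A ⊆ X)
    (hXc : X.card ≤ m + i - 1) :
    m * H.card ≤ i * (Dlev i H).card := by
  rcases H.eq_empty_or_nonempty with rfl | ⟨A, hA⟩
  · simp [Dlev]
  have hmX : m ≤ X.card := by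
    rw [← hu A hA]; exact Finset.card_le_card (hX A hA)
  have hchain := lym_chain (m - i) H m i (by omega) hi hu hX
  have hkey : i * m.descFactorial (m - i) = m * (m - 1).descFactorial (m - i) := by
    have := key_id (m := m) (k := m - i) (by omega)
    rw [show m - (m - i) = i by omega] at this
    exact this
  have hmono : Nat.descFactorial (X.card - i) (m - i) ≤ Nat.descFactorial (m - 1) (m - i) :=
    descFactorial_mono _ (by omega)
  have hpos : 0 < Nat.descFactorial (X.card - i) (m - i) := by
    rcases Nat.eq_zero_or_pos (Nat.descFactorial (X.card - i) (m - i)) with h | h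
    · rw [Nat.descFactorial_eq_zero_iff_lt] at h; omega
    · exact h
  have : (m * H.card) * Nat.descFactorial (X.card - i) (m - i)
      ≤ (i * (Dlev i H).card) * Nat.descFactorial (X.card - i) (m - i) := by
    calc (m * H.card) * Nat.descFactorial (X.card - i) (m - i)
        ≤ (m * H.card) * Nat.descFactorial (m - 1) (m - i) := Nat.mul_le_mul_left _ hmono
      _ = (m * Nat.descFactorial (m - 1) (m - i)) * H.card := by ring
      _ = (i * m.descFactorial (m - i)) * H.card := by rw [hkey]
      _ = i * (m.descFactorial (m - i) * H.card) := by ring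
      _ ≤ i * (Nat.descFactorial (X.card - i) (m - i) * (Dlev i H).card) :=
          Nat.mul_le_mul_left _ hchain
      _ = (i * (Dlev i H).card) * Nat.descFactorial (X.card - i) (m - i) := by ring
  exact Nat.le_of_mul_le_mul_right this hpos


lemma compress_singleton {u v : ℕ} (huv : u ≠ v) {Z : Finset ℕ} (hv : v ∈ Z) (hu : u ∉ Z) :
    UV.compress {u} {v} Z = insert u (Z.erase v) := by
  rw [UV.compress, if_pos ⟨Finset.disjoint_singleton_left.2 hu, Finset.singleton_subset_iff.2 hv⟩]
  ext a
  simp only [Finset.sup_eq_union, Finset.mem_sdiff, Finset.mem_union, Finset.mem_singleton,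
    Finset.mem_insert, Finset.mem_erase]
  constructor
  · rintro ⟨h1 | h1, h2⟩
    · exact Or.inr ⟨h2, h1⟩
    · exact Or.inl h1
  · rintro (rfl | ⟨hav, haZ⟩)
    · exact ⟨Or.inr rfl, huv⟩
    · exact ⟨Or.inl haZ, hav⟩

lemma compress_ne_imp {u v : ℕ} {Z : Finset ℕ} (h : UV.compress {u} {v} Z ≠ Z) :
    u ∉ Z ∧ v ∈ Z := by
  by_contra hc
  apply h
  rw [UV.compress, if_neg]
  rintro ⟨h1, h2⟩
  exact hc ⟨Finset.disjoint_singleton_left.1 h1, Finset.singleton_subset_iff.1 h2⟩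

lemma tint_case2 {H : Finset (Finset ℕ)} {t u v : ℕ} (huv : u ≠ v)
    (hint : ∀ A ∈ H, ∀ B ∈ H, t ≤ (A ∩ B).card)
    {X Z : Finset ℕ} (hX : X ∈ H) (hXc : UV.compress {u} {v} X ∈ H)
    (hZ : Z ∈ H) (hvZ : v ∈ Z) (huZ : u ∉ Z) :
    t ≤ (X ∩ insert u (Z.erase v)).card := by
  by_cases hvX : v ∈ X
  · by_cases huX : u ∈ X
    · have e : X ∩ insert u (Z.erase v) = insert u ((X ∩ Z).erase v) := by
        rw [Finset.inter_insert_of_mem huX, Finset.inter_erase]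
      rw [e, Finset.card_insert_of_notMem (by simp [huZ]),
        Finset.card_erase_of_mem (by simp [hvX, hvZ])]
      have h1 := hint X hX Z hZ
      have h2 : v ∈ X ∩ Z := by simp [hvX, hvZ]
      have h3 : 1 ≤ (X ∩ Z).card := Finset.card_pos.2 ⟨v, h2⟩
      omega
    · have hcx : UV.compress {u} {v} X = insert u (X.erase v) :=
        compress_singleton huv hvX huX
      have h2 := hint _ (hcx ▸ hXc) Z hZ
      have e1 : insert u (X.erase v) ∩ Z = (X ∩ Z).erase v := by
        rw [Finset.insert_inter_of_notMem huZ, Finset.erase_inter]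
      have e2 : X ∩ insert u (Z.erase v) = (X ∩ Z).erase v := by
        rw [Finset.inter_insert_of_notMem huX, Finset.inter_erase]
      rw [e2]
      rw [e1] at h2
      exact h2
  · refine le_trans (hint X hX Z hZ) (Finset.card_le_card ?_)
    intro a ha
    rw [Finset.mem_inter] at ha ⊢
    refine ⟨ha.1, Finset.mem_insert.2 (Or.inr (Finset.mem_erase.2 ⟨?_, ha.2⟩))⟩
    rintro rfl
    exact hvX ha.1

lemma tint_compression {H : Finset (Finset ℕ)} {t u v : ℕ} (huv : u ≠ v)
    (hint : ∀ A ∈ H, ∀ B ∈ H, t ≤ (A ∩ B).card) :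
    ∀ A ∈ UV.compression {u} {v} H, ∀ B ∈ UV.compression {u} {v} H, t ≤ (A ∩ B).card := by
  intro A hA B hB
  rw [UV.mem_compression] at hA hB
  rcases hA with ⟨hA, hAc⟩ | ⟨hA, Z, hZ, rfl⟩
  · rcases hB with ⟨hB, hBc⟩ | ⟨hB, W, hW, rfl⟩
    · exact hint A hA B hB
    · obtain ⟨huW, hvW⟩ := compress_ne_imp (fun h => hB (h ▸ hW))
      rw [compress_singleton huv hvW huW]
      exact tint_case2 huv hint hA hAc hW hvW huW
  · obtain ⟨huZ, hvZ⟩ := compress_ne_imp (fun h => hA (h ▸ hZ))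
    rcases hB with ⟨hB, hBc⟩ | ⟨hB, W, hW, rfl⟩
    · rw [Finset.inter_comm, compress_singleton huv hvZ huZ]
      exact tint_case2 huv hint hB hBc hZ hvZ huZ
    · obtain ⟨huW, hvW⟩ := compress_ne_imp (fun h => hB (h ▸ hW))
      rw [compress_singleton huv hvZ huZ, compress_singleton huv hvW huW]
      have e : insert u (Z.erase v) ∩ insert u (W.erase v) = insert u ((Z ∩ W).erase v) := by
        rw [Finset.insert_inter_of_mem (Finset.mem_insert_self _ _),
          Finset.inter_insert_of_notMem (by simp [huZ]), Finset.erase_inter,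
          Finset.inter_erase, Finset.erase_idem]
      rw [e, Finset.card_insert_of_notMem (by simp [huZ]),
        Finset.card_erase_of_mem (by simp [hvZ, hvW])]
      have h1 := hint Z hZ W hW
      have h3 : 1 ≤ (Z ∩ W).card := Finset.card_pos.2 ⟨v, by simp [hvZ, hvW]⟩
      omega

lemma uniform_compression {H : Finset (Finset ℕ)} {m : ℕ} (u v : ℕ)
    (h : ∀ A ∈ H, A.card = m) :
    ∀ A ∈ UV.compression {u} {v} H, A.card = m := by
  intro A hA
  rw [UV.mem_compression] at hA
  rcases hA with ⟨hA, -⟩ | ⟨-, Z, hZ, rfl⟩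
  · exact h A hA
  · rw [UV.card_compress (by simp)]
    exact h Z hZ

lemma Dlev_eq_shadow_iterate {H : Finset (Finset ℕ)} {m i : ℕ}
    (hu : ∀ A ∈ H, A.card = m) (him : i ≤ m) :
    Dlev i H = (Finset.shadow)^[m - i] H := by
  ext S
  rw [mem_Dlev, Finset.mem_shadow_iterate_iff_exists_mem_card_add]
  constructor
  · rintro ⟨A, hA, hSA, hS⟩
    exact ⟨A, hA, hSA, by rw [hu A hA, hS]; omega⟩
  · rintro ⟨A, hA, hSA, hcard⟩
    have := hu A hA
    exact ⟨A, hA, hSA, by omega⟩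

lemma shadow_iterate_mono {X Y : Finset (Finset ℕ)} (k : ℕ) (h : X ⊆ Y) :
    (Finset.shadow)^[k] X ⊆ (Finset.shadow)^[k] Y := by
  induction k generalizing X Y with
  | zero => simpa
  | succ k ih =>
    rw [Function.iterate_succ_apply, Function.iterate_succ_apply]
    exact ih (Finset.shadow_mono h)

lemma card_shadow_iterate_compression_le (u v : ℕ) (k : ℕ) :
    ∀ 𝒜 : Finset (Finset ℕ),
      ((Finset.shadow)^[k] (UV.compression {u} {v} 𝒜)).card ≤ ((Finset.shadow)^[k] 𝒜).card := by
  induction k with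
  | zero =>
    intro 𝒜
    simp [UV.card_compression]
  | succ k ih =>
    intro 𝒜
    have hyp : ∀ x ∈ ({u} : Finset ℕ), ∃ y ∈ ({v} : Finset ℕ),
        UV.IsCompressed (({u} : Finset ℕ).erase x) (({v} : Finset ℕ).erase y) 𝒜 := by
      intro x hx
      refine ⟨v, Finset.mem_singleton_self _, ?_⟩
      rw [Finset.mem_singleton] at hx
      subst hx
      simp only [Finset.erase_singleton]
      exact UV.isCompressed_self _ _
    have h1 : Finset.shadow (UV.compression {u} {v} 𝒜) ⊆
        UV.compression {u} {v} (Finset.shadow 𝒜) :=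
      UV.shadow_compression_subset_compression_shadow _ _ hyp
    rw [Function.iterate_succ_apply, Function.iterate_succ_apply]
    calc ((Finset.shadow)^[k] (Finset.shadow (UV.compression {u} {v} 𝒜))).card
        ≤ ((Finset.shadow)^[k] (UV.compression {u} {v} (Finset.shadow 𝒜))).card :=
          Finset.card_le_card (shadow_iterate_mono k h1)
      _ ≤ ((Finset.shadow)^[k] (Finset.shadow 𝒜)).card := ih _

def Wt (H : Finset (Finset ℕ)) : ℕ := ∑ A ∈ H, ∑ a ∈ A, (a + 1)

lemma Wt_compression_lt {H : Finset (Finset ℕ)} {u v : ℕ} (huv : u < v)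
    (hne : UV.compression {u} {v} H ≠ H) :
    Wt (UV.compression {u} {v} H) < Wt H := by
  classical
  set c : Finset ℕ → Finset ℕ := UV.compress ({u} : Finset ℕ) {v} with hc
  set P := H.filter (fun A => c A ∈ H) with hP
  set Q := H.filter (fun A => c A ∉ H) with hQ
  have happ : ∀ Z ∈ Q, u ∉ Z ∧ v ∈ Z := by
    intro Z hZ
    rw [hQ, Finset.mem_filter] at hZ
    exact compress_ne_imp (fun h => hZ.2 (by show UV.compress {u} {v} Z ∈ H; rw [h]; exact hZ.1))
  have hcform : ∀ Z ∈ Q, c Z = insert u (Z.erase v) := by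
    intro Z hZ
    exact compress_singleton (by omega) (happ Z hZ).2 (happ Z hZ).1
  have hCeq : UV.compression {u} {v} H = P ∪ Q.image c := by
    rw [UV.compression, Finset.filter_image]
  have hdisj : Disjoint P (Q.image c) := by
    rw [Finset.disjoint_left]
    intro A hA hA'
    obtain ⟨Z, hZ, rfl⟩ := Finset.mem_image.1 hA'
    rw [hQ, Finset.mem_filter] at hZ
    rw [hP, Finset.mem_filter] at hA
    exact hZ.2 hA.1
  have hinj : ∀ x ∈ Q, ∀ y ∈ Q, c x = c y → x = y := by
    intro x hx y hy hxy
    rw [hcform x hx, hcform y hy] at hxy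
    have hxu : u ∉ x.erase v := by simp [(happ x hx).1]
    have hyu : u ∉ y.erase v := by simp [(happ y hy).1]
    have h2 : (insert u (x.erase v)).erase u = (insert u (y.erase v)).erase u := by rw [hxy]
    rw [Finset.erase_insert hxu, Finset.erase_insert hyu] at h2
    have h3 : insert v (x.erase v) = insert v (y.erase v) := by rw [h2]
    rwa [Finset.insert_erase (happ x hx).2, Finset.insert_erase (happ y hy).2] at h3
  have hQne : Q.Nonempty := by
    rcases Q.eq_empty_or_nonempty with h | h
    · exfalso
      apply hne
      rw [hCeq, h, Finset.image_empty, Finset.union_empty, hP]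
      rw [Finset.filter_eq_self]
      intro A hA
      by_contra hcA
      have : A ∈ Q := by rw [hQ, Finset.mem_filter]; exact ⟨hA, hcA⟩
      rw [h] at this
      exact absurd this (Finset.notMem_empty _)
    · exact h
  have hdec : ∀ Z ∈ Q, ∑ a ∈ c Z, (a + 1) < ∑ a ∈ Z, (a + 1) := by
    intro Z hZ
    rw [hcform Z hZ]
    have h1 : ∑ a ∈ insert u (Z.erase v), (a + 1) = (u + 1) + ∑ a ∈ Z.erase v, (a + 1) :=
      Finset.sum_insert (by simp [(happ Z hZ).1])
    have h2 : (∑ a ∈ Z.erase v, (a + 1)) + (v + 1) = ∑ a ∈ Z, (a + 1) :=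
      Finset.sum_erase_add _ _ (happ Z hZ).2
    omega
  have hWC : Wt (UV.compression {u} {v} H) = (∑ A ∈ P, ∑ a ∈ A, (a + 1))
      + ∑ Z ∈ Q, ∑ a ∈ c Z, (a + 1) := by
    rw [Wt, hCeq, Finset.sum_union hdisj, Finset.sum_image hinj]
  have hWH : Wt H = (∑ A ∈ P, ∑ a ∈ A, (a + 1)) + ∑ Z ∈ Q, ∑ a ∈ Z, (a + 1) := by
    rw [Wt, hP, hQ, Finset.sum_filter_add_sum_filter_not]
  rw [hWC, hWH]
  have := Finset.sum_lt_sum_of_nonempty hQne hdec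
  omega

lemma Dlev_compression_card_le {H : Finset (Finset ℕ)} {m i : ℕ} (u v : ℕ)
    (hu : ∀ A ∈ H, A.card = m) (him : i ≤ m) :
    (Dlev i (UV.compression {u} {v} H)).card ≤ (Dlev i H).card := by
  rw [Dlev_eq_shadow_iterate (uniform_compression u v hu) him, Dlev_eq_shadow_iterate hu him]
  exact card_shadow_iterate_compression_le u v (m - i) H

theorem KR : ∀ (w : ℕ) (H : Finset (Finset ℕ)) (t i : ℕ), Wt H ≤ w → 1 ≤ t → 1 ≤ i →
    (∀ A ∈ H, A.card = t + i - 1) →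
    (∀ A ∈ H, ∀ B ∈ H, t ≤ (A ∩ B).card) →
    (t + i - 1) * H.card ≤ i * (Dlev i H).card := by
  intro w
  induction w using Nat.strong_induction_on with
  | _ w ih =>
  intro H t i hW ht hi hu hint
  rcases H.eq_empty_or_nonempty with rfl | ⟨A0, hA0⟩
  · simp [Dlev]
  set m := t + i - 1 with hm
  clear_value m
  have hm1 : 1 ≤ m := by omega
  have him : i ≤ m := by omega
  by_cases hi2 : 2 ≤ i
  case neg =>
    -- i = 1, m = t : all members of H are equal
    have hi1 : i = 1 := by omega
    subst hi1
    have hone : ∀ a ∈ H, ∀ b ∈ H, a = b := by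
      intro a ha b hb
      have h1 := hint a ha b hb
      have h2 : a ∩ b = a := Finset.eq_of_subset_of_card_le Finset.inter_subset_left
        (by rw [hu a ha]; omega)
      have h3 : a ⊆ b := by rw [← h2]; exact Finset.inter_subset_right
      exact Finset.eq_of_subset_of_card_le h3 (by rw [hu a ha, hu b hb])
    have hsing : H = {A0} := by
      apply Finset.eq_singleton_iff_unique_mem.2
      exact ⟨hA0, fun x hx => hone x hx A0 hA0⟩
    rw [hsing]
    rw [show Dlev 1 {A0} = A0.powersetCard 1 from Finset.singleton_biUnion]
    rw [Finset.card_powersetCard, Finset.card_singleton, hu A0 hA0, Nat.choose_one_right]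
    omega
  case pos =>
  set X := H.sup id with hX
  have hXA : ∀ A ∈ H, A ⊆ X := fun A hA => Finset.le_sup (f := id) hA
  by_cases hsmall : X.card ≤ m + i - 1
  · exact small_ground hi him hu hXA hsmall
  push_neg at hsmall
  have hXne : X.Nonempty := by
    obtain ⟨a, ha⟩ := Finset.card_pos.1 (show 0 < A0.card by rw [hu A0 hA0]; omega)
    exact ⟨a, hXA A0 hA0 ha⟩
  set v := X.max' hXne with hv
  have hvX : v ∈ X := X.max'_mem hXne
  have hvmax : ∀ x ∈ X, x ≤ v := fun x hx => X.le_max' x hx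
  by_cases hshift : ∀ u' ∈ X, u' ≠ v → UV.IsCompressed {u'} {v} H
  case neg =>
    push_neg at hshift
    obtain ⟨u, huX, huv, hnc⟩ := hshift
    have hul : u < v := lt_of_le_of_ne (hvmax u huX) huv
    have hne : UV.compression {u} {v} H ≠ H := hnc
    have hWlt := Wt_compression_lt hul hne
    have hint' := tint_compression (t := t) huv hint
    have hu' := uniform_compression (H := H) (m := m) u v hu
    have hrec := ih (Wt (UV.compression {u} {v} H)) (by omega)
      (UV.compression {u} {v} H) t i le_rfl ht hi (hm ▸ hu') hint'
    rw [← hm] at hrec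
    calc m * H.card = m * (UV.compression {u} {v} H).card := by rw [UV.card_compression]
      _ ≤ i * (Dlev i (UV.compression {u} {v} H)).card := hrec
      _ ≤ i * (Dlev i H).card :=
          Nat.mul_le_mul_left _ (Dlev_compression_card_le u v hu him)
  case pos =>
  set H0 := H.filter (fun A => ¬ v ∈ A) with hH0
  set H1' := H.filter (fun A => v ∈ A) with hH1'
  set H1 := H1'.image (fun A => A.erase v) with hH1
  have hH1'ne : H1'.Nonempty := by
    obtain ⟨A, hA, hvA⟩ := Finset.mem_sup.1 hvX
    exact ⟨A, Finset.mem_filter.2 ⟨hA, hvA⟩⟩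
  have hinj1 : ∀ x ∈ H1', ∀ y ∈ H1', x.erase v = y.erase v → x = y := by
    intro x hx y hy h
    have h2 : insert v (x.erase v) = insert v (y.erase v) := by rw [h]
    rwa [Finset.insert_erase (Finset.mem_filter.1 hx).2,
      Finset.insert_erase (Finset.mem_filter.1 hy).2] at h2
  have hcard1 : H1.card = H1'.card := Finset.card_image_of_injOn hinj1
  have hWsplit : Wt H1' + Wt H0 = Wt H := by
    rw [Wt, Wt, Wt, hH0, hH1']
    exact Finset.sum_filter_add_sum_filter_not H _ _
  have hWt1' : 1 ≤ Wt H1' := by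
    obtain ⟨A, hA⟩ := hH1'ne
    have hvA : v ∈ A := (Finset.mem_filter.1 hA).2
    have hb1 : v + 1 ≤ ∑ a ∈ A, (a + 1) :=
      Finset.single_le_sum (f := fun a => a + 1) (fun a _ => by omega) hvA
    have hb2 : ∑ a ∈ A, (a + 1) ≤ Wt H1' :=
      Finset.single_le_sum (f := fun B => ∑ a ∈ B, (a + 1)) (fun _ _ => by omega) hA
    omega
  have hWH0 : Wt H0 < Wt H := by omega
  have hWH1 : Wt H1 < Wt H := by
    have he : Wt H1 = ∑ A ∈ H1', ∑ a ∈ A.erase v, (a + 1) := Finset.sum_image hinj1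
    have hlt : ∑ A ∈ H1', ∑ a ∈ A.erase v, (a + 1) < ∑ A ∈ H1', ∑ a ∈ A, (a + 1) := by
      apply Finset.sum_lt_sum_of_nonempty hH1'ne
      intro A hA
      have h2 : (∑ a ∈ A.erase v, (a + 1)) + (v + 1) = ∑ a ∈ A, (a + 1) :=
        Finset.sum_erase_add _ _ (Finset.mem_filter.1 hA).2
      omega
    have : Wt H1 < Wt H1' := by rw [he]; exact hlt
    omega
  -- H0
  have hu0 : ∀ A ∈ H0, A.card = m := fun A hA => hu A (Finset.mem_filter.1 hA).1
  have hint0 : ∀ A ∈ H0, ∀ B ∈ H0, t ≤ (A ∩ B).card :=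
    fun A hA B hB => hint A (Finset.mem_filter.1 hA).1 B (Finset.mem_filter.1 hB).1
  have ihH0 := ih (Wt H0) (by omega) H0 t i le_rfl ht hi (hm ▸ hu0) hint0
  rw [← hm] at ihH0
  -- H1
  have hu1 : ∀ B ∈ H1, B.card = t + (i - 1) - 1 := by
    intro B hB
    obtain ⟨A, hA, rfl⟩ := Finset.mem_image.1 hB
    rw [Finset.card_erase_of_mem (Finset.mem_filter.1 hA).2, hu A (Finset.mem_filter.1 hA).1]
    omega
  have hint1 : ∀ B ∈ H1, ∀ B' ∈ H1, t ≤ (B ∩ B').card := by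
    intro B hB B' hB'
    obtain ⟨A, hA, rfl⟩ := Finset.mem_image.1 hB
    obtain ⟨A', hA', rfl⟩ := Finset.mem_image.1 hB'
    have hAH : A ∈ H := (Finset.mem_filter.1 hA).1
    have hA'H : A' ∈ H := (Finset.mem_filter.1 hA').1
    have hvA : v ∈ A := (Finset.mem_filter.1 hA).2
    have hvA' : v ∈ A' := (Finset.mem_filter.1 hA').2
    by_contra hlt
    push_neg at hlt
    have hEq : A.erase v ∩ A'.erase v = (A ∩ A').erase v := by
      rw [Finset.erase_inter, Finset.inter_erase, Finset.erase_idem]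
    have hAA' := hint A hAH A' hA'H
    have hvAA' : v ∈ A ∩ A' := Finset.mem_inter.2 ⟨hvA, hvA'⟩
    have hcardE : ((A ∩ A').erase v).card = (A ∩ A').card - 1 :=
      Finset.card_erase_of_mem hvAA'
    have hce : (A.erase v ∩ A'.erase v).card = t - 1 := by
      rw [hEq]
      have h2 : (A ∩ A').card ≤ t := by
        have := hlt
        rw [hEq, hcardE] at this
        have hpos : 1 ≤ (A ∩ A').card := Finset.card_pos.2 ⟨v, hvAA'⟩
        omega
      omega
    -- find a fresh element x
    set S := insert v (A.erase v ∪ A'.erase v) with hS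
    have hS_sub : S ⊆ X := by
      apply Finset.insert_subset hvX
      apply Finset.union_subset
      · exact subset_trans (Finset.erase_subset _ _) (hXA A hAH)
      · exact subset_trans (Finset.erase_subset _ _) (hXA A' hA'H)
    have hcardU : (A.erase v ∪ A'.erase v).card + (A.erase v ∩ A'.erase v).card
        = (A.erase v).card + (A'.erase v).card := Finset.card_union_add_card_inter _ _
    have hcA : (A.erase v).card = m - 1 := by
      rw [Finset.card_erase_of_mem hvA, hu A hAH]
    have hcA' : (A'.erase v).card = m - 1 := by
      rw [Finset.card_erase_of_mem hvA', hu A' hA'H]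
    have hcardS : S.card ≤ 2 * m - t := by
      have hq0 : S.card ≤ (A.erase v ∪ A'.erase v).card + 1 := by
        rw [hS]; exact Finset.card_insert_le _ _
      have hq3 : m = t + i - 1 := hm
      omega
    have harith : 2 * m - t ≤ m + i - 1 := by omega
    have hne2 : (X \ S).Nonempty := by
      rw [← Finset.card_pos, Finset.card_sdiff_of_subset hS_sub]
      have hq1 : S.card ≤ 2 * m - t := hcardS
      have hq2 : m + i - 1 < X.card := hsmall
      omega
    obtain ⟨x, hx⟩ := hne2
    have hxX : x ∈ X := (Finset.mem_sdiff.1 hx).1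
    have hxS : x ∉ S := (Finset.mem_sdiff.1 hx).2
    have hxv : x ≠ v := fun h => hxS (by rw [hS, h]; exact Finset.mem_insert_self _ _)
    have hxA : x ∉ A := by
      intro h
      exact hxS (by
        rw [hS]
        exact Finset.mem_insert_of_mem
          (Finset.mem_union_left _ (Finset.mem_erase.2 ⟨hxv, h⟩)))
    have hxA'e : x ∉ A'.erase v := by
      intro h
      exact hxS (by rw [hS]; exact Finset.mem_insert_of_mem (Finset.mem_union_right _ h))
    have hcomp := hshift x hxX hxv
    have hmem0 : UV.compress {x} {v} A ∈ UV.compression {x} {v} H :=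
      UV.compress_mem_compression hAH
    rw [hcomp.eq] at hmem0
    rw [compress_singleton hxv hvA hxA] at hmem0
    have hfin := hint _ hmem0 A' hA'H
    have hxA'not : x ∉ A' := by
      intro h
      exact hxA'e (Finset.mem_erase.2 ⟨hxv, h⟩)
    have he1 : insert x (A.erase v) ∩ A' = (A.erase v) ∩ A' :=
      Finset.insert_inter_of_notMem hxA'not
    have he2 : (A.erase v) ∩ A' = (A ∩ A').erase v := Finset.erase_inter _ _ _
    rw [he1, he2] at hfin
    rw [hEq] at hce
    omega
  have ihH1 := ih (Wt H1) (by omega) H1 t (i - 1) le_rfl ht (by omega) hu1 hint1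
  -- decomposition of the shadow
  have hvfree : ∀ S ∈ Dlev (i - 1) H1, v ∉ S := by
    intro S hS
    obtain ⟨B, hB, h1, -⟩ := mem_Dlev.1 hS
    obtain ⟨A, hA, rfl⟩ := Finset.mem_image.1 hB
    exact fun h => Finset.notMem_erase v A (h1 h)
  have hdcard : (Dlev i H0).card + (Dlev (i - 1) H1).card ≤ (Dlev i H).card := by
    have hsub : Dlev i H0 ∪ (Dlev (i - 1) H1).image (insert v) ⊆ Dlev i H := by
      intro S hSm
      rcases Finset.mem_union.1 hSm with hSm | hSm
      · obtain ⟨A, hA, h1, h2⟩ := mem_Dlev.1 hSm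
        exact mem_Dlev.2 ⟨A, (Finset.mem_filter.1 hA).1, h1, h2⟩
      · obtain ⟨S', hS', rfl⟩ := Finset.mem_image.1 hSm
        obtain ⟨B, hB, h1, h2⟩ := mem_Dlev.1 hS'
        obtain ⟨A, hA, rfl⟩ := Finset.mem_image.1 hB
        have hvA : v ∈ A := (Finset.mem_filter.1 hA).2
        have hAH : A ∈ H := (Finset.mem_filter.1 hA).1
        have hvS' : v ∉ S' := hvfree S' hS'
        refine mem_Dlev.2 ⟨A, hAH, ?_, ?_⟩
        · intro a ha
          rcases Finset.mem_insert.1 ha with rfl | ha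
          · exact hvA
          · exact (Finset.erase_subset _ _) (h1 ha)
        · rw [Finset.card_insert_of_notMem hvS', h2]; omega
    have hdisj2 : Disjoint (Dlev i H0) ((Dlev (i - 1) H1).image (insert v)) := by
      rw [Finset.disjoint_right]
      rintro S hSm hS0
      obtain ⟨S', hS', rfl⟩ := Finset.mem_image.1 hSm
      obtain ⟨A, hA, h1, -⟩ := mem_Dlev.1 hS0
      exact (Finset.mem_filter.1 hA).2 (h1 (Finset.mem_insert_self _ _))
    have hinj2 : ∀ x ∈ Dlev (i - 1) H1, ∀ y ∈ Dlev (i - 1) H1,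
        insert v x = insert v y → x = y := by
      intro x hx y hy h
      have h2 : (insert v x).erase v = (insert v y).erase v := by rw [h]
      rwa [Finset.erase_insert (hvfree x hx), Finset.erase_insert (hvfree y hy)] at h2
    calc (Dlev i H0).card + (Dlev (i - 1) H1).card
        = (Dlev i H0 ∪ (Dlev (i - 1) H1).image (insert v)).card := by
          rw [Finset.card_union_of_disjoint hdisj2, Finset.card_image_of_injOn hinj2]
      _ ≤ (Dlev i H).card := Finset.card_le_card hsub
  -- arithmetic
  have hsplitcard : H1'.card + H0.card = H.card := by
    rw [hH0, hH1']
    exact Finset.card_filter_add_card_filter_not _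
  have h5 : m * H1.card ≤ i * (Dlev (i - 1) H1).card := by
    have hmm : t + (i - 1) - 1 = m - 1 := by omega
    rw [hmm] at ihH1
    have e1 : (i - 1) * m + m = i * m := by
      have : (i - 1) + 1 = i := by omega
      calc (i - 1) * m + m = ((i - 1) + 1) * m := by ring
        _ = i * m := by rw [this]
    have e2 : i * (m - 1) + i = i * m := by
      have : (m - 1) + 1 = m := by omega
      calc i * (m - 1) + i = i * ((m - 1) + 1) := by ring
        _ = i * m := by rw [this]
    have key : (i - 1) * m ≤ i * (m - 1) := by omega
    have h6 : (i - 1) * (m * H1.card) ≤ (i - 1) * (i * (Dlev (i - 1) H1).card) := by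
      calc (i - 1) * (m * H1.card) = ((i - 1) * m) * H1.card := by ring
        _ ≤ (i * (m - 1)) * H1.card := Nat.mul_le_mul_right _ key
        _ = i * ((m - 1) * H1.card) := by ring
        _ ≤ i * ((i - 1) * (Dlev (i - 1) H1).card) := Nat.mul_le_mul_left _ ihH1
        _ = (i - 1) * (i * (Dlev (i - 1) H1).card) := by ring
    exact Nat.le_of_mul_le_mul_left h6 (by omega)
  calc m * H.card = m * H0.card + m * H1'.card := by
        rw [← hsplitcard]; ring
    _ = m * H0.card + m * H1.card := by rw [hcard1]
    _ ≤ i * (Dlev i H0).card + i * (Dlev (i - 1) H1).card := Nat.add_le_add ihH0 h5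
    _ = i * ((Dlev i H0).card + (Dlev (i - 1) H1).card) := by ring
    _ ≤ i * (Dlev i H).card := Nat.mul_le_mul_left _ hdcard

end Stmt11Aux

open Stmt11Aux in
theorem stmt_11 (n s i : ℕ) (hs2 : 2 ≤ s) (hsn : s ≤ n - 2)
    (hi1 : 1 ≤ i) (hi : 2 * i ≤ s)
    (F : Finset (Finset ℕ))
    (hF : ∀ A ∈ F, A ⊆ Finset.Icc 1 n)
    (hunion : ∀ A ∈ F, ∀ B ∈ F, (A ∪ B).card ≤ s) :
    (F.filter (fun A => A.card = i)).card +
        (F.filter (fun A => A.card = s + 1 - i)).card ≤ n.choose i ∧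
      ((F.filter (fun A => A.card = i)).card +
          (F.filter (fun A => A.card = s + 1 - i)).card = n.choose i ↔
        F.filter (fun A => A.card = i) = (Finset.Icc 1 n).powersetCard i ∧
          F.filter (fun A => A.card = s + 1 - i) = ∅) := by
  classical
  have hn : s + 2 ≤ n := by omega
  set X := Finset.Icc 1 n with hX
  have hXcard : X.card = n := by rw [hX, Nat.card_Icc]; omega
  set Fi := F.filter (fun A => A.card = i) with hFi
  set G := F.filter (fun A => A.card = s + 1 - i) with hG
  set t := n - s with ht
  have ht2 : 2 ≤ t := by omega
  set m := t + i - 1 with hm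
  clear_value m
  set H := G.image (fun B => X \ B) with hH
  have hGsub : ∀ B ∈ G, B ⊆ X := fun B hB => hF B (Finset.mem_filter.1 hB).1
  have hGcard : ∀ B ∈ G, B.card = s + 1 - i := fun B hB => (Finset.mem_filter.1 hB).2
  have hHcard : H.card = G.card := Finset.card_image_of_injOn (by
    intro a ha b hb hab
    simp only [] at hab
    have h2 : X \ (X \ a) = X \ (X \ b) := by rw [hab]
    rwa [Finset.sdiff_sdiff_eq_self (hGsub a ha), Finset.sdiff_sdiff_eq_self (hGsub b hb)] at h2)
  have hHu : ∀ A ∈ H, A.card = m := by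
    intro A hA
    obtain ⟨B, hB, rfl⟩ := Finset.mem_image.1 hA
    rw [Finset.card_sdiff_of_subset (hGsub B hB), hXcard, hGcard B hB]
    omega
  have hHint : ∀ A ∈ H, ∀ A' ∈ H, t ≤ (A ∩ A').card := by
    intro A hA A' hA'
    obtain ⟨B, hB, rfl⟩ := Finset.mem_image.1 hA
    obtain ⟨B', hB', rfl⟩ := Finset.mem_image.1 hA'
    have he : (X \ B) ∩ (X \ B') = X \ (B ∪ B') := by
      ext a
      simp only [Finset.mem_inter, Finset.mem_sdiff, Finset.mem_union]
      tauto
    rw [he, Finset.card_sdiff_of_subset (Finset.union_subset (hGsub B hB) (hGsub B' hB')), hXcard]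
    have := hunion B (Finset.mem_filter.1 hB).1 B' (Finset.mem_filter.1 hB').1
    omega
  have hKR := KR (Wt H) H t i le_rfl (by omega) hi1 (by rw [← hm]; exact hHu) hHint
  rw [← hm, hHcard] at hKR
  set D := Dlev i H with hD
  have hDsub : D ⊆ X.powersetCard i := by
    intro S hS
    obtain ⟨A, hA, h1, h2⟩ := mem_Dlev.1 hS
    obtain ⟨B, hB, rfl⟩ := Finset.mem_image.1 hA
    exact Finset.mem_powersetCard.2 ⟨h1.trans Finset.sdiff_subset, h2⟩
  have hFisub : Fi ⊆ X.powersetCard i := by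
    intro A hA
    exact Finset.mem_powersetCard.2 ⟨hF A (Finset.mem_filter.1 hA).1, (Finset.mem_filter.1 hA).2⟩
  have hdisj : Disjoint Fi D := by
    rw [Finset.disjoint_left]
    intro A hAFi hAD
    obtain ⟨A', hA', h1, h2⟩ := mem_Dlev.1 hAD
    obtain ⟨B, hB, rfl⟩ := Finset.mem_image.1 hA'
    have hABd : Disjoint A B := Finset.disjoint_left.2 fun a haA haB =>
      (Finset.mem_sdiff.1 (h1 haA)).2 haB
    have hcu : (A ∪ B).card = A.card + B.card := Finset.card_union_of_disjoint hABd
    have h3 := hunion A (Finset.mem_filter.1 hAFi).1 B (Finset.mem_filter.1 hB).1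
    have h4 : A.card = i := (Finset.mem_filter.1 hAFi).2
    have h5 := hGcard B hB
    omega
  have hsum : Fi.card + D.card ≤ n.choose i := by
    have h1 := Finset.card_le_card (Finset.union_subset hFisub hDsub)
    rw [Finset.card_union_of_disjoint hdisj] at h1
    rwa [Finset.card_powersetCard, hXcard] at h1
  have hstrict : G.Nonempty → G.card + 1 ≤ D.card := by
    rintro ⟨B0, hB0⟩
    have hA0 : X \ B0 ∈ H := Finset.mem_image_of_mem _ hB0
    have hDge : Nat.choose m i ≤ D.card := by
      have hsub2 : (X \ B0).powersetCard i ⊆ D := fun S hS => mem_Dlev.2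
        ⟨X \ B0, hA0, (Finset.mem_powersetCard.1 hS).1, (Finset.mem_powersetCard.1 hS).2⟩
      have h2 := Finset.card_le_card hsub2
      rwa [Finset.card_powersetCard, hHu _ hA0] at h2
    have hchoose : i + 1 ≤ Nat.choose m i := by
      calc i + 1 = Nat.choose (i + 1) i := (Nat.choose_succ_self_right i).symm
        _ ≤ Nat.choose m i := Nat.choose_le_choose i (by omega)
    by_cases hgi : G.card ≤ i
    · omega
    · have h1 : (i + 1) * G.card ≤ i * D.card :=
        le_trans (Nat.mul_le_mul_right _ (by omega : i + 1 ≤ m)) hKR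
      by_contra hcon
      push_neg at hcon
      have h2 : i * D.card ≤ i * G.card := Nat.mul_le_mul_left _ (by omega)
      have h3 : (i + 1) * G.card = i * G.card + G.card := by ring
      omega
  have hmain : Fi.card + G.card ≤ n.choose i := by
    rcases G.eq_empty_or_nonempty with h | h
    · rw [h]
      simp only [Finset.card_empty, add_zero]
      omega
    · have := hstrict h
      omega
  refine ⟨hmain, ?_, ?_⟩
  · intro heq
    have hGe : G = ∅ := by
      rcases G.eq_empty_or_nonempty with h | h
      · exact h
      · exfalso
        have := hstrict h
        omega
    refine ⟨?_, hGe⟩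
    rw [hGe] at heq
    simp only [Finset.card_empty, add_zero] at heq
    apply Finset.eq_of_subset_of_card_le hFisub
    rw [Finset.card_powersetCard, hXcard, heq]
  · rintro ⟨h1, h2⟩
    rw [h2, Finset.card_empty, add_zero, h1, Finset.card_powersetCard, hXcard]
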